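/- Let L ≥ 1, let n : Fin L → ℕ with n l ≥ 2 for all l, and let G = Π_{l ∈ Fin L} ZMod (n l). For l ∈ Fin L, let e^l ∈ G be the element with l-th coordinate 1 and all other coordinates 0, and let K^l := {k ∈ G : k_j = 0 for all j ≥ l} (elements supported on the first l coordinates), so K^0 = {0}. Let S be the set of index pairs consisting of: (0,0); (0, e^l) for each l; (e^l, s·e^l) for each l and 1 ≤ s ≤ n l − 2; and (t·e^l, k) for each l, 1 ≤ t ≤ n l − 1, and k ∈ K^l with k ≠ 0 and k_l = 0 (i.e., k ∈ K^{l'} for l' the index of l, k supported on coordinates strictly before l). Let Θ, Θ̃ : G → ℝ be real signals with F(Θ)_κ ≠ 0 for every κ ∈ G. If β(Θ̃)_{κ,κ'} = β(Θ)_{κ,κ'} for every (κ,κ') ∈ S, then there exists h ∈ G such that Θ̃(g) = Θ(g + h) for all g ∈ G. (Selective-bispectrum inversion on an arbitrary finite product of cyclic groups, hence on any finite commutative group, using only |G| bispectral coefficients.) -/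

import Mathlib

open Finset

/-- The character of `G = Π_{l : Fin L} ZMod (n l)` indexed by `κ`:
`χ_κ(g) = Π_l exp(2πi·κ̄_l·ḡ_l/(n l))`. -/
noncomputable def piChar {L : ℕ} (n : Fin L → ℕ) [∀ l, NeZero (n l)]
    (κ u : ∀ l, ZMod (n l)) : ℂ :=
  ∏ l : Fin L,
    Complex.exp (2 * (Real.pi : ℂ) * Complex.I * (((κ l).val * (u l).val : ℕ)) / (n l : ℂ))


noncomputable def primRt (m : ℕ) : ℂ := Complex.exp (2 * (Real.pi : ℂ) * Complex.I / m)

lemma primRt_isPrim (m : ℕ) [NeZero m] : IsPrimitiveRoot (primRt m) m :=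
  Complex.isPrimitiveRoot_exp m (NeZero.ne m)

lemma primRt_pow_self (m : ℕ) [NeZero m] : primRt m ^ m = 1 :=
  (primRt_isPrim m).pow_eq_one

lemma primRt_pow_mod (m : ℕ) [NeZero m] (a : ℕ) : primRt m ^ a = primRt m ^ (a % m) := by
  conv_lhs => rw [← Nat.div_add_mod a m]
  rw [pow_add, pow_mul, primRt_pow_self, one_pow, one_mul]

lemma primRt_pow_congr (m : ℕ) [NeZero m] {a b : ℕ} (h : a ≡ b [MOD m]) :
    primRt m ^ a = primRt m ^ b := by
  rw [primRt_pow_mod, h, ← primRt_pow_mod]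

lemma primRt_normSq (m : ℕ) [NeZero m] : Complex.normSq (primRt m) = 1 := by
  have h1 : Complex.normSq (primRt m) ^ m = 1 := by
    rw [← map_pow Complex.normSq, primRt_pow_self]; simp
  have h0 := Complex.normSq_nonneg (primRt m)
  rcases lt_trichotomy (Complex.normSq (primRt m)) 1 with h | h | h
  · exact absurd h1 (ne_of_lt (pow_lt_one₀ h0 h (NeZero.ne m)))
  · exact h
  · exact absurd h1.symm (ne_of_lt (one_lt_pow₀ h (NeZero.ne m)))

lemma primRt_pow_mul_conj (m : ℕ) [NeZero m] (a : ℕ) :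
    primRt m ^ a * (starRingEnd ℂ) (primRt m ^ a) = 1 := by
  rw [Complex.mul_conj, map_pow Complex.normSq, primRt_normSq, one_pow, Complex.ofReal_one]



lemma piChar_eq_prod {L : ℕ} (n : Fin L → ℕ) [∀ l, NeZero (n l)] (κ u : ∀ l, ZMod (n l)) :
    piChar n κ u = ∏ l, primRt (n l) ^ ((κ l).val * (u l).val) := by
  unfold piChar primRt
  refine Finset.prod_congr rfl fun l _ => ?_
  rw [← Complex.exp_nat_mul]
  congr 1
  push_cast
  ring

section PiCharProps

variable {L : ℕ} (n : Fin L → ℕ) [∀ l, NeZero (n l)]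

lemma piChar_comm (κ u : ∀ l, ZMod (n l)) : piChar n κ u = piChar n u κ := by
  rw [piChar_eq_prod, piChar_eq_prod]
  exact Finset.prod_congr rfl fun l _ => by rw [mul_comm ((κ l).val)]

lemma piChar_mul_conj (κ u : ∀ l, ZMod (n l)) :
    piChar n κ u * (starRingEnd ℂ) (piChar n κ u) = 1 := by
  rw [piChar_eq_prod, map_prod, ← Finset.prod_mul_distrib]
  exact Finset.prod_eq_one fun l _ => primRt_pow_mul_conj _ _

lemma piChar_ne_zero (κ u : ∀ l, ZMod (n l)) : piChar n κ u ≠ 0 :=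
  fun h => by simpa [h] using piChar_mul_conj n κ u

lemma piChar_zero_right (κ : ∀ l, ZMod (n l)) : piChar n κ 0 = 1 := by
  rw [piChar_eq_prod]
  exact Finset.prod_eq_one fun l _ => by simp [ZMod.val_zero]

lemma piChar_zero_left (u : ∀ l, ZMod (n l)) : piChar n 0 u = 1 := by
  rw [piChar_comm]; exact piChar_zero_right n u

lemma piChar_add_right (κ u v : ∀ l, ZMod (n l)) :
    piChar n κ (u + v) = piChar n κ u * piChar n κ v := by
  simp only [piChar_eq_prod, ← Finset.prod_mul_distrib]
  refine Finset.prod_congr rfl fun l _ => ?_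
  rw [← pow_add]
  refine primRt_pow_congr _ ?_
  have : ((u + v) l).val ≡ (u l).val + (v l).val [MOD n l] := by
    show _ % _ = _ % _
    rw [Pi.add_apply, ZMod.val_add, Nat.mod_mod_of_dvd _ dvd_rfl]
  calc (κ l).val * ((u + v) l).val
      ≡ (κ l).val * ((u l).val + (v l).val) [MOD n l] := this.mul_left _
    _ = (κ l).val * (u l).val + (κ l).val * (v l).val := by ring

lemma piChar_neg_right (κ u : ∀ l, ZMod (n l)) :
    piChar n κ (-u) = (starRingEnd ℂ) (piChar n κ u) := by
  have h1 : piChar n κ u * piChar n κ (-u) = 1 := by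
    rw [← piChar_add_right, add_neg_cancel, piChar_zero_right]
  have h2 := piChar_mul_conj n κ u
  exact mul_left_cancel₀ (piChar_ne_zero n κ u) (h1.trans h2.symm)

end PiCharProps

lemma sum_zmod_val (m : ℕ) [NeZero m] (f : ℕ → ℂ) :
    ∑ x : ZMod m, f x.val = ∑ j ∈ Finset.range m, f j := by
  refine Finset.sum_nbij' (fun x => x.val) (fun j => (j : ZMod m)) ?_ ?_ ?_ ?_ ?_
  · intro a _; exact Finset.mem_range.2 (ZMod.val_lt a)
  · intro a _; exact Finset.mem_univ _
  · intro a _; exact ZMod.natCast_rightInverse a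
  · intro a ha; exact ZMod.val_natCast_of_lt (Finset.mem_range.1 ha)
  · intro a _; rfl

lemma sum_primRt_pow (m : ℕ) [NeZero m] (c : ZMod m) :
    ∑ x : ZMod m, primRt m ^ (c.val * x.val) = if c = 0 then (m : ℂ) else 0 := by
  split_ifs with hc
  · subst hc; simp [ZMod.val_zero]
  · have hcv : 0 < c.val := Nat.pos_of_ne_zero (fun h => hc ((ZMod.val_eq_zero c).1 h))
    have hne1 : primRt m ^ c.val ≠ 1 :=
      (primRt_isPrim m).pow_ne_one_of_pos_of_lt hcv.ne' (ZMod.val_lt c)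
    have hpm : (primRt m ^ c.val) ^ m = 1 := by
      rw [← pow_mul, mul_comm, pow_mul, primRt_pow_self, one_pow]
    calc ∑ x : ZMod m, primRt m ^ (c.val * x.val)
        = ∑ x : ZMod m, (primRt m ^ c.val) ^ x.val := by
          exact Finset.sum_congr rfl fun x _ => by rw [pow_mul]
      _ = ∑ j ∈ Finset.range m, (primRt m ^ c.val) ^ j := sum_zmod_val m _
      _ = ((primRt m ^ c.val) ^ m - 1) / (primRt m ^ c.val - 1) := geom_sum_eq hne1 m
      _ = 0 := by rw [hpm]; simp

lemma sum_piChar {L : ℕ} (n : Fin L → ℕ) [∀ l, NeZero (n l)] (κ : ∀ l, ZMod (n l)) :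
    ∑ u : ∀ l, ZMod (n l), piChar n κ u
      = if κ = 0 then ((∏ l, n l : ℕ) : ℂ) else 0 := by
  have key : ∑ u : ∀ l, ZMod (n l), piChar n κ u
      = ∏ l, ∑ x : ZMod (n l), primRt (n l) ^ ((κ l).val * x.val) := by
    rw [Finset.prod_univ_sum]
    rw [Fintype.piFinset_univ]
    exact Finset.sum_congr rfl fun u _ => piChar_eq_prod n κ u
  rw [key]
  split_ifs with hκ
  · subst hκ
    push_cast
    exact Finset.prod_congr rfl fun l _ => by
      simpa using sum_primRt_pow (n l) 0
  · have : ∃ l, κ l ≠ 0 := by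
      by_contra h; push_neg at h; exact hκ (funext h)
    obtain ⟨l, hl⟩ := this
    refine Finset.prod_eq_zero (Finset.mem_univ l) ?_
    rw [sum_primRt_pow, if_neg hl]
/-- The Fourier transform on `G = Π_{l : Fin L} ZMod (n l)`:
`F(Θ)_κ = Σ_{u} Θ(u) · conj(χ_κ(u))`. -/
noncomputable def piDFT {L : ℕ} (n : Fin L → ℕ) [∀ l, NeZero (n l)]
    (Θ : (∀ l, ZMod (n l)) → ℂ) (κ : ∀ l, ZMod (n l)) : ℂ :=
  ∑ u : ∀ l, ZMod (n l), Θ u * (starRingEnd ℂ) (piChar n κ u)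

/-- The bispectrum on `G = Π_{l : Fin L} ZMod (n l)`:
`β(Θ)_{κ,κ'} = F(Θ)_κ · F(Θ)_{κ'} · conj(F(Θ)_{κ+κ'})`. -/
noncomputable def piBispectrum {L : ℕ} (n : Fin L → ℕ) [∀ l, NeZero (n l)]
    (Θ : (∀ l, ZMod (n l)) → ℂ) (κ κ' : ∀ l, ZMod (n l)) : ℂ :=
  piDFT n Θ κ * piDFT n Θ κ' * (starRingEnd ℂ) (piDFT n Θ (κ + κ'))

open Complex


section DFT

variable {L : ℕ} (n : Fin L → ℕ) [∀ l, NeZero (n l)]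

lemma card_ne_zero' : ((∏ l, n l : ℕ) : ℂ) ≠ 0 := by
  refine Nat.cast_ne_zero.2 (Finset.prod_ne_zero_iff.2 fun l _ => NeZero.ne (n l))

/-- Fourier inversion / injectivity. -/
lemma piDFT_injective {f g : (∀ l, ZMod (n l)) → ℂ}
    (h : ∀ κ, piDFT n f κ = piDFT n g κ) : f = g := by
  have key : ∀ F : (∀ l, ZMod (n l)) → ℂ, ∀ u,
      ∑ κ : ∀ l, ZMod (n l), piDFT n F κ * piChar n κ u
        = ((∏ l, n l : ℕ) : ℂ) * F u := by
    intro F u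
    have step : ∀ κ, piDFT n F κ * piChar n κ u
        = ∑ v : ∀ l, ZMod (n l), F v * piChar n κ (u - v) := by
      intro κ
      rw [piDFT, Finset.sum_mul]
      refine Finset.sum_congr rfl fun v _ => ?_
      have : piChar n κ (u - v) = (starRingEnd ℂ) (piChar n κ v) * piChar n κ u := by
        rw [sub_eq_add_neg, piChar_add_right, piChar_neg_right, mul_comm]
      rw [this]; ring
    calc ∑ κ : ∀ l, ZMod (n l), piDFT n F κ * piChar n κ u
        = ∑ κ : ∀ l, ZMod (n l), ∑ v : ∀ l, ZMod (n l), F v * piChar n κ (u - v) :=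
          Finset.sum_congr rfl fun κ _ => step κ
      _ = ∑ v : ∀ l, ZMod (n l), F v * ∑ κ : ∀ l, ZMod (n l), piChar n κ (u - v) := by
          rw [Finset.sum_comm]
          exact Finset.sum_congr rfl fun v _ => by rw [Finset.mul_sum]
      _ = ∑ v : ∀ l, ZMod (n l), F v * ∑ κ : ∀ l, ZMod (n l), piChar n (u - v) κ := by
          refine Finset.sum_congr rfl fun v _ => ?_
          congr 1
          exact Finset.sum_congr rfl fun κ _ => piChar_comm n κ (u - v)
      _ = ∑ v : ∀ l, ZMod (n l), F v *
            (if u - v = 0 then ((∏ l, n l : ℕ) : ℂ) else 0) := by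
          exact Finset.sum_congr rfl fun v _ => by rw [sum_piChar]
      _ = ((∏ l, n l : ℕ) : ℂ) * F u := by
          rw [Finset.sum_eq_single u]
          · simp [mul_comm]
          · intro v _ hv
            rw [if_neg (fun hh => hv (by linear_combination (norm := abel) -hh)), mul_zero]
          · intro hu; exact absurd (Finset.mem_univ u) hu
  funext u
  have h1 := key f u
  have h2 := key g u
  have h3 : ∑ κ : ∀ l, ZMod (n l), piDFT n f κ * piChar n κ u
      = ∑ κ : ∀ l, ZMod (n l), piDFT n g κ * piChar n κ u :=
    Finset.sum_congr rfl fun κ _ => by rw [h κ]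
  exact mul_left_cancel₀ (card_ne_zero' n) ((h1.symm.trans h3).trans h2)
end DFT

lemma piDFT_real_neg {L : ℕ} (n : Fin L → ℕ) [∀ l, NeZero (n l)]
    (Θ : (∀ l, ZMod (n l)) → ℝ) (κ : ∀ l, ZMod (n l)) :
    piDFT n (fun g => (Θ g : ℂ)) (-κ) = (starRingEnd ℂ) (piDFT n (fun g => (Θ g : ℂ)) κ) := by
  rw [piDFT, piDFT, map_sum]
  refine Finset.sum_congr rfl fun u _ => ?_
  rw [map_mul, Complex.conj_conj, Complex.conj_ofReal]
  congr 1
  rw [piChar_comm, piChar_neg_right, piChar_comm, Complex.conj_conj]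

lemma piDFT_translate {L : ℕ} (n : Fin L → ℕ) [∀ l, NeZero (n l)]
    (f : (∀ l, ZMod (n l)) → ℂ) (h κ : ∀ l, ZMod (n l)) :
    piDFT n (fun g => f (g + h)) κ = piDFT n f κ * piChar n κ h := by
  rw [piDFT, piDFT, Finset.sum_mul]
  refine Fintype.sum_equiv (Equiv.addRight h) _ _ fun u => ?_
  show f (u + h) * (starRingEnd ℂ) (piChar n κ u) = f (u + h) * (starRingEnd ℂ) (piChar n κ (u + h)) * piChar n κ h
  rw [piChar_add_right, map_mul, mul_assoc, mul_assoc]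
  congr 1
  rw [mul_comm ((starRingEnd ℂ) (piChar n κ h)), piChar_mul_conj, mul_one]

lemma unit_pow {c : ℂ} (h : c * (starRingEnd ℂ) c = 1) (k : ℕ) :
    c ^ k * (starRingEnd ℂ) (c ^ k) = 1 := by
  rw [map_pow, ← mul_pow, h, one_pow]

lemma unit_resolve {A z w : ℂ} (hA : A * (starRingEnd ℂ) A = 1)
    (h : A * (starRingEnd ℂ) z = (starRingEnd ℂ) w) : z = A * w := by
  have h' : (starRingEnd ℂ) A * z = w := by
    have := congrArg (starRingEnd ℂ) h
    simpa [map_mul, Complex.conj_conj] using this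
  calc z = (A * (starRingEnd ℂ) A) * z := by rw [hA, one_mul]
    _ = A * ((starRingEnd ℂ) A * z) := by ring
    _ = A * w := by rw [h']

section Helpers

variable {L : ℕ} {n : Fin L → ℕ} [∀ l, NeZero (n l)]

lemma smul_single_one (t : ℕ) (l : Fin L) :
    t • (Pi.single l 1 : ∀ j, ZMod (n j)) = Pi.single l ((t : ZMod (n l))) := by
  funext j
  by_cases hj : j = l
  · subst hj
    rw [Pi.smul_apply, Pi.single_eq_same, Pi.single_eq_same, nsmul_eq_mul, mul_one]
  · rw [Pi.smul_apply, Pi.single_eq_of_ne hj, Pi.single_eq_of_ne hj, smul_zero]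

lemma single_neg' (l : Fin L) (c : ZMod (n l)) :
    (Pi.single l (-c) : ∀ j, ZMod (n j)) = -Pi.single l c := by
  funext j
  by_cases hj : j = l
  · subst hj; rw [Pi.single_eq_same, Pi.neg_apply, Pi.single_eq_same]
  · rw [Pi.single_eq_of_ne hj, Pi.neg_apply, Pi.single_eq_of_ne hj, neg_zero]

end Helpers

lemma conj_ne_zero' {z : ℂ} (h : z ≠ 0) : (starRingEnd ℂ) z ≠ 0 := fun hh =>
  h (by simpa using congrArg (starRingEnd ℂ) hh)

lemma unit_mul {a b : ℂ} (ha : a * (starRingEnd ℂ) a = 1) (hb : b * (starRingEnd ℂ) b = 1) :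
    (a * b) * (starRingEnd ℂ) (a * b) = 1 := by
  rw [map_mul]
  calc a * b * ((starRingEnd ℂ) a * (starRingEnd ℂ) b)
      = (a * (starRingEnd ℂ) a) * (b * (starRingEnd ℂ) b) := by ring
    _ = 1 := by rw [ha, hb, one_mul]
/-- Selective-bispectrum inversion on an arbitrary finite product of cyclic groups
(hence, on any finite commutative group), using only `|G|` bispectral coefficients:
the coefficients `β_{0,0}`, `β_{0,e^l}`, `β_{e^l, s·e^l}` (for `1 ≤ s ≤ n l − 2`) and
`β_{t·e^l, k}` (for `1 ≤ t ≤ n l − 1` and `k ≠ 0` supported on the coordinates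
strictly before `l`) determine a real signal with nonvanishing Fourier transform up
to translation. -/
theorem selective_bispectrum_inversion_commutative (L : ℕ) (hL : 1 ≤ L)
    (n : Fin L → ℕ) [∀ l, NeZero (n l)] (hn : ∀ l, 2 ≤ n l)
    (Θ Θ' : (∀ l, ZMod (n l)) → ℝ)
    (hF : ∀ κ : ∀ l, ZMod (n l), piDFT n (fun g => (Θ g : ℂ)) κ ≠ 0)
    (h00 : piBispectrum n (fun g => (Θ' g : ℂ)) 0 0
         = piBispectrum n (fun g => (Θ g : ℂ)) 0 0)
    (h0e : ∀ l : Fin L,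
      piBispectrum n (fun g => (Θ' g : ℂ)) 0 (Pi.single l 1)
        = piBispectrum n (fun g => (Θ g : ℂ)) 0 (Pi.single l 1))
    (hes : ∀ l : Fin L, ∀ s : ℕ, 1 ≤ s → s ≤ n l - 2 →
      piBispectrum n (fun g => (Θ' g : ℂ)) (Pi.single l 1) (s • Pi.single l 1)
        = piBispectrum n (fun g => (Θ g : ℂ)) (Pi.single l 1) (s • Pi.single l 1))
    (htk : ∀ l : Fin L, ∀ t : ℕ, 1 ≤ t → t ≤ n l - 1 →
      ∀ k : ∀ j, ZMod (n j), (∀ j : Fin L, l ≤ j → k j = 0) → k ≠ 0 →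
      piBispectrum n (fun g => (Θ' g : ℂ)) (t • Pi.single l 1) k
        = piBispectrum n (fun g => (Θ g : ℂ)) (t • Pi.single l 1) k) :
    ∃ h : ∀ l, ZMod (n l), ∀ g : ∀ l, ZMod (n l), Θ' g = Θ (g + h) := by
  classical
  simp only [piBispectrum] at h00 h0e hes htk
  set F : (∀ l, ZMod (n l)) → ℂ := piDFT n (fun g => (Θ g : ℂ)) with hFdef
  set F' : (∀ l, ZMod (n l)) → ℂ := piDFT n (fun g => (Θ' g : ℂ)) with hF'def
  -- Step A : F' 0 = F 0
  have hreal : ∀ (Ψ : (∀ l, ZMod (n l)) → ℝ),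
      piDFT n (fun g => (Ψ g : ℂ)) 0 = ((∑ u : ∀ l, ZMod (n l), Ψ u : ℝ) : ℂ) := by
    intro Ψ
    rw [piDFT]
    push_cast
    refine Finset.sum_congr rfl fun u _ => ?_
    rw [piChar_zero_left, map_one, mul_one]
  have hF'0r : F' 0 = ((∑ u : ∀ l, ZMod (n l), Θ' u : ℝ) : ℂ) := by
    rw [hF'def]; exact hreal Θ'
  have hF0r : F 0 = ((∑ u : ∀ l, ZMod (n l), Θ u : ℝ) : ℂ) := by
    rw [hFdef]; exact hreal Θ
  have hF0 : F' 0 = F 0 := by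
    have h := h00
    rw [zero_add, hF'0r, hF0r, Complex.conj_ofReal, Complex.conj_ofReal] at h
    have h3 : ((∑ u : ∀ l, ZMod (n l), Θ' u : ℝ) : ℂ) ^ 3
        = ((∑ u : ∀ l, ZMod (n l), Θ u : ℝ) : ℂ) ^ 3 := by linear_combination h
    have h3' : (∑ u : ∀ l, ZMod (n l), Θ' u) ^ 3
        = (∑ u : ∀ l, ZMod (n l), Θ u) ^ 3 := by exact_mod_cast h3
    have hsum := (Odd.strictMono_pow (R := ℝ) (⟨1, by norm_num⟩ : Odd 3)).injective h3'
    rw [hF'0r, hF0r, hsum]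
  -- Step B
  have hF0ne : F 0 ≠ 0 := hF 0
  have hmod : ∀ l, F' (Pi.single l 1) * (starRingEnd ℂ) (F' (Pi.single l 1))
      = F (Pi.single l 1) * (starRingEnd ℂ) (F (Pi.single l 1)) := by
    intro l
    have h := h0e l
    rw [zero_add, hF0, mul_assoc, mul_assoc] at h
    exact mul_left_cancel₀ hF0ne h
  set ψ : Fin L → ℂ := fun l => F' (Pi.single l 1) / F (Pi.single l 1) with hψdef
  have hψF : ∀ l, F' (Pi.single l 1) = ψ l * F (Pi.single l 1) := fun l =>
    (div_mul_cancel₀ _ (hF _)).symm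
  have hψu : ∀ l, ψ l * (starRingEnd ℂ) (ψ l) = 1 := by
    intro l
    have hd : F (Pi.single l 1) * (starRingEnd ℂ) (F (Pi.single l 1)) ≠ 0 :=
      mul_ne_zero (hF _) (conj_ne_zero' (hF _))
    calc ψ l * (starRingEnd ℂ) (ψ l)
        = (F' (Pi.single l 1) * (starRingEnd ℂ) (F' (Pi.single l 1)))
          / (F (Pi.single l 1) * (starRingEnd ℂ) (F (Pi.single l 1))) := by
          rw [hψdef]; simp only [map_div₀]; ring
      _ = 1 := by rw [hmod l, div_self hd]
  -- claim 1
  have claim1 : ∀ l, ∀ t : ℕ, t ≤ n l - 1 →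
      F' (t • (Pi.single l 1 : ∀ j, ZMod (n j))) = ψ l ^ t * F (t • Pi.single l 1) := by
    intro l t
    induction t with
    | zero =>
      intro _
      rw [zero_nsmul, pow_zero, one_mul]
      exact hF0
    | succ t ih =>
      intro hle
      rcases Nat.eq_zero_or_pos t with rfl | ht
      · rw [one_nsmul, pow_one]
        exact hψF l
      · have ht2 : t ≤ n l - 2 := by have := hn l; omega
        have h := hes l t ht ht2
        have hsucc : Pi.single l 1 + t • (Pi.single l 1 : ∀ j, ZMod (n j))
            = (t+1) • Pi.single l 1 := (succ_nsmul' _ _).symm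
        rw [hsucc, hψF l, ih (by omega)] at h
        have hA : (ψ l ^ (t+1)) * (starRingEnd ℂ) (F' ((t+1) • Pi.single l 1))
            = (starRingEnd ℂ) (F ((t+1) • Pi.single l 1)) := by
          have hcan : (F (Pi.single l 1) * F (t • Pi.single l 1)) *
              ((ψ l ^ (t+1)) * (starRingEnd ℂ) (F' ((t+1) • Pi.single l 1)))
              = (F (Pi.single l 1) * F (t • Pi.single l 1)) *
                (starRingEnd ℂ) (F ((t+1) • Pi.single l 1)) := by
            linear_combination h
          exact mul_left_cancel₀ (mul_ne_zero (hF _) (hF _)) hcan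
        exact unit_resolve (unit_pow (hψu l) (t+1)) hA
  -- ψ l ^ (n l) = 1
  have hψpow : ∀ l, ψ l ^ (n l) = 1 := by
    intro l
    have h1 := claim1 l (n l - 1) le_rfl
    have hneg : ((n l - 1) • (Pi.single l 1 : ∀ j, ZMod (n j))) = -(Pi.single l 1) := by
      rw [smul_single_one, ← single_neg']
      congr 1
      have h2 := hn l
      rw [Nat.cast_sub (by omega : 1 ≤ n l), ZMod.natCast_self, Nat.cast_one, zero_sub]
    rw [hneg] at h1
    have hc' : F' (-(Pi.single l 1)) = (starRingEnd ℂ) (F' (Pi.single l 1)) := by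
      rw [hF'def]; exact piDFT_real_neg n Θ' _
    have hc : F (-(Pi.single l 1)) = (starRingEnd ℂ) (F (Pi.single l 1)) := by
      rw [hFdef]; exact piDFT_real_neg n Θ _
    rw [hc', hc, hψF l, map_mul] at h1
    have hconjψ : (starRingEnd ℂ) (ψ l) = ψ l ^ (n l - 1) :=
      mul_right_cancel₀ (conj_ne_zero' (hF _)) h1
    calc ψ l ^ (n l) = ψ l ^ (n l - 1) * ψ l := by
          rw [← pow_succ]; congr 1; have := hn l; omega
      _ = (starRingEnd ℂ) (ψ l) * ψ l := by rw [hconjψ]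
      _ = 1 := by rw [mul_comm]; exact hψu l
  -- main induction
  have claim2 : ∀ M : ℕ, M ≤ L → ∀ κ : ∀ l, ZMod (n l),
      (∀ j : Fin L, M ≤ (j : ℕ) → κ j = 0) →
      F' κ = (∏ l, ψ l ^ (κ l).val) * F κ := by
    intro M
    induction M with
    | zero =>
      intro _ κ hκ
      obtain rfl : κ = 0 := funext fun j => hκ j (Nat.zero_le _)
      rw [Finset.prod_eq_one (fun l _ => by rw [Pi.zero_apply, ZMod.val_zero, pow_zero]),
        one_mul]
      exact hF0
    | succ M ihM =>
      intro hML κ hκ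
      have hM : M < L := by omega
      set lf : Fin L := ⟨M, hM⟩ with hlf
      set k : ∀ j, ZMod (n j) := Function.update κ lf 0 with hkdef
      have hksupp : ∀ j : Fin L, M ≤ (j : ℕ) → k j = 0 := by
        intro j hj
        by_cases hjl : j = lf
        · subst hjl; rw [hkdef]; exact Function.update_self _ _ _
        · rw [hkdef]
          rw [Function.update_of_ne hjl]
          refine hκ j ?_
          have hne : (j : ℕ) ≠ M := fun hh => hjl (Fin.ext hh)
          omega
      have hkdec : κ = (κ lf).val • (Pi.single lf 1 : ∀ j, ZMod (n j)) + k := by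
        funext j
        by_cases hjl : j = lf
        · subst hjl
          rw [Pi.add_apply, hkdef, Function.update_self, add_zero, smul_single_one,
            Pi.single_eq_same, ZMod.natCast_val, ZMod.cast_id]
        · rw [Pi.add_apply, hkdef, Function.update_of_ne hjl, smul_single_one,
            Pi.single_eq_of_ne hjl, zero_add]
      have hprodsplit : (∏ l, ψ l ^ (κ l).val)
          = ψ lf ^ (κ lf).val * (∏ l, ψ l ^ (k l).val) := by
        rw [← Finset.mul_prod_erase Finset.univ (fun l => ψ l ^ (κ l).val)
            (Finset.mem_univ lf),
          ← Finset.mul_prod_erase Finset.univ (fun l => ψ l ^ (k l).val)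
            (Finset.mem_univ lf)]
        simp only [hkdef, Function.update_self, ZMod.val_zero, pow_zero, one_mul]
        congr 1
        refine Finset.prod_congr rfl fun j hj => ?_
        rw [Function.update_of_ne (Finset.ne_of_mem_erase hj)]
      by_cases ht0 : (κ lf).val = 0
      · refine ihM (by omega) κ ?_
        intro j hj
        by_cases hjl : j = lf
        · subst hjl; exact (ZMod.val_eq_zero _).1 ht0
        · refine hκ j ?_
          have hne : (j : ℕ) ≠ M := fun hh => hjl (Fin.ext hh)
          omega
      · have ht1 : 1 ≤ (κ lf).val := Nat.pos_of_ne_zero ht0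
        have htle : (κ lf).val ≤ n lf - 1 := by
          have := ZMod.val_lt (κ lf); omega
        by_cases hk0 : k = 0
        · rw [hk0, add_zero] at hkdec
          rw [hprodsplit, hk0]
          rw [Finset.prod_eq_one (fun l _ => by rw [Pi.zero_apply, ZMod.val_zero, pow_zero]),
            mul_one]
          have hgoal := claim1 lf (κ lf).val htle
          rw [← hkdec] at hgoal
          exact hgoal
        · have hksupp' : ∀ j : Fin L, lf ≤ j → k j = 0 := by
            intro j hj
            exact hksupp j (by rwa [Fin.le_def] at hj)
          have h := htk lf (κ lf).val ht1 htle k hksupp' hk0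
          rw [← hkdec] at h
          rw [claim1 lf (κ lf).val htle, ihM (by omega) k hksupp] at h
          have hU : (ψ lf ^ (κ lf).val * (∏ l, ψ l ^ (k l).val)) *
              (starRingEnd ℂ) (ψ lf ^ (κ lf).val * (∏ l, ψ l ^ (k l).val)) = 1 := by
            refine unit_mul (unit_pow (hψu lf) _) ?_
            rw [map_prod, ← Finset.prod_mul_distrib]
            exact Finset.prod_eq_one fun l _ => unit_pow (hψu l) _
          have hA : (ψ lf ^ (κ lf).val * (∏ l, ψ l ^ (k l).val)) *
              (starRingEnd ℂ) (F' κ) = (starRingEnd ℂ) (F κ) := by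
            have hcan : (F ((κ lf).val • Pi.single lf 1) * F k) *
                ((ψ lf ^ (κ lf).val * (∏ l, ψ l ^ (k l).val)) * (starRingEnd ℂ) (F' κ))
                = (F ((κ lf).val • Pi.single lf 1) * F k) * (starRingEnd ℂ) (F κ) := by
              linear_combination h
            exact mul_left_cancel₀ (mul_ne_zero (hF _) (hF _)) hcan
          rw [hprodsplit]
          exact unit_resolve hU hA
  have hFull : ∀ κ, F' κ = (∏ l, ψ l ^ (κ l).val) * F κ := fun κ =>
    claim2 L le_rfl κ (fun j hj => absurd hj (Nat.not_le.2 j.isLt))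
  -- choose the shift
  choose mfun hmlt hmeq using fun l =>
    (primRt_isPrim (n l)).eq_pow_of_pow_eq_one (hψpow l)
  refine ⟨fun l => ((mfun l : ℕ) : ZMod (n l)), ?_⟩
  have hchar : ∀ κ : ∀ l, ZMod (n l),
      piChar n κ (fun l => ((mfun l : ℕ) : ZMod (n l))) = ∏ l, ψ l ^ (κ l).val := by
    intro κ
    rw [piChar_eq_prod]
    refine Finset.prod_congr rfl fun l _ => ?_
    calc primRt (n l) ^ ((κ l).val * ((mfun l : ℕ) : ZMod (n l)).val)
        = (primRt (n l) ^ (((mfun l : ℕ) : ZMod (n l)).val)) ^ (κ l).val := by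
          rw [← pow_mul, mul_comm]
      _ = (primRt (n l) ^ (mfun l)) ^ (κ l).val := by
          rw [ZMod.val_natCast, ← primRt_pow_mod]
      _ = ψ l ^ (κ l).val := by rw [hmeq l]
  have key : (fun g => (Θ' g : ℂ))
      = (fun g => (Θ (g + fun l => ((mfun l : ℕ) : ZMod (n l))) : ℂ)) := by
    refine piDFT_injective n fun κ => ?_
    have htr := piDFT_translate n (fun g => (Θ g : ℂ))
      (fun l => ((mfun l : ℕ) : ZMod (n l))) κ
    calc piDFT n (fun g => (Θ' g : ℂ)) κ = F' κ := by rw [hF'def]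
      _ = (∏ l, ψ l ^ (κ l).val) * F κ := hFull κ
      _ = F κ * piChar n κ (fun l => ((mfun l : ℕ) : ZMod (n l))) := by
          rw [hchar κ, mul_comm]
      _ = piDFT n (fun g => (Θ (g + fun l => ((mfun l : ℕ) : ZMod (n l))) : ℂ)) κ := by
          rw [hFdef]
          exact htr.symm
  intro g
  exact_mod_cast congrFun key g
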